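/- arXiv:1312.1205 — 5 statements merged into one kernel-verified Lean document; each statement's English description precedes it below -/
import Mathlib

section
/- For all finite nonempty simple graphs G and G', and for every labeled graph H on vertex set {1,…,t}: r(H, G ⊗ G') = Σ r(H1, G) · r(H2, G'), where the sum ranges over all ordered pairs (H1, H2) of labeled graphs on {1,…,t} whose edge sets have symmetric difference equal to the edge set of H. That is, the labeled t-profile of G ⊗ G' is the convolution, over the group of labeled t-vertex graphs under symmetric difference of edge sets, of the labeled t-profiles of G and G'. -/
open Filter Topology SimpleGraph

namespace IndPaper

/-- The pullback of `G : SimpleGraph V` along a map `f : Fin t → V`: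
distinct `i, j` are adjacent iff `f i` and `f j` are adjacent in `G`. -/
def pull {V : Type*} {t : ℕ} (G : SimpleGraph V) (f : Fin t → V) : SimpleGraph (Fin t) where
  Adj i j := G.Adj (f i) (f j)
  symm := ⟨fun i j h => G.adj_symm h⟩
  loopless := ⟨fun i h => G.irrefl h⟩

/-- `r(H,G)`: the labeled density with repetitions of the labeled graph `H` in `G`. -/
noncomputable def labDensity {V : Type*} [Fintype V] {t : ℕ}
    (H : SimpleGraph (Fin t)) (G : SimpleGraph V) : ℝ :=
  (Nat.card {f : Fin t → V // pull G f = H} : ℝ) / (Fintype.card V : ℝ) ^ t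

/-- `R(H,G)`: the density with repetitions of the isomorphism type of `H` in `G`. -/
noncomputable def repDensity {V : Type*} [Fintype V] {t : ℕ}
    (H : SimpleGraph (Fin t)) (G : SimpleGraph V) : ℝ :=
  (Nat.card {f : Fin t → V // Nonempty (pull G f ≃g H)} : ℝ) / (Fintype.card V : ℝ) ^ t

/-- `p(H,G)`: the labeled density without repetitions (injective samples). -/
noncomputable def injDensity {V : Type*} [Fintype V] {t : ℕ}
    (H : SimpleGraph (Fin t)) (G : SimpleGraph V) : ℝ :=
  (Nat.card {f : Fin t → V // Function.Injective f ∧ pull G f = H} : ℝ) /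
    ((Fintype.card V).descFactorial t : ℝ)

/-- `P(H,G)`: the number of `t`-subsets of `V(G)` inducing a copy of `H`, over `C(n,t)`. -/
noncomputable def subsetDensity {V : Type*} [Fintype V] {t : ℕ}
    (H : SimpleGraph (Fin t)) (G : SimpleGraph V) : ℝ :=
  (Nat.card {s : Finset V // s.card = t ∧ Nonempty (G.induce (↑s : Set V) ≃g H)} : ℝ) /
    ((Fintype.card V).choose t : ℝ)

/-- `max_{|G|=n} P(H,G)`. -/
noncomputable def maxDensity {t : ℕ} (H : SimpleGraph (Fin t)) (n : ℕ) : ℝ :=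
  sSup {x : ℝ | ∃ G : SimpleGraph (Fin n), x = subsetDensity H G}

/-- `min_{|G|=n} P(H,G)`. -/
noncomputable def minDensity {t : ℕ} (H : SimpleGraph (Fin t)) (n : ℕ) : ℝ :=
  sInf {x : ℝ | ∃ G : SimpleGraph (Fin n), x = subsetDensity H G}

/-- The inducibility `I(H) = lim_n max_{|G|=n} P(H,G)` (the sequence of maxima is
eventually non-increasing, hence the limit exists and equals the `limsup`). -/
noncomputable def inducibility {t : ℕ} (H : SimpleGraph (Fin t)) : ℝ :=
  Filter.limsup (fun n => maxDensity H n) Filter.atTop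

/-- The minimal inducibility `i(H) = lim_n min_{|G|=n} P(H,G)` (the sequence of minima is
eventually non-decreasing, hence the limit exists and equals the `liminf`). -/
noncomputable def minInducibility {t : ℕ} (H : SimpleGraph (Fin t)) : ℝ :=
  Filter.liminf (fun n => minDensity H n) Filter.atTop

/-- The spectral profile: discrete Fourier transform of the labeled profile over the group
of labeled `t`-vertex graphs under symmetric difference of edge sets. -/
noncomputable def spectral {V : Type*} [Fintype V] {t : ℕ}
    (H : SimpleGraph (Fin t)) (G : SimpleGraph V) : ℝ :=
  ∑ H' : SimpleGraph (Fin t),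
    (-1 : ℝ) ^ (Nat.card (H ⊓ H').edgeSet) * labDensity H' G

/-- The tensor product `G ⊗ G'`. -/
def tensor {V W : Type*} (G : SimpleGraph V) (G' : SimpleGraph W) : SimpleGraph (V × W) where
  Adj x y := Xor' (G.Adj x.1 y.1) (G'.Adj x.2 y.2)
  symm := ⟨fun x y h => by
    rcases h with ⟨h1, h2⟩ | ⟨h1, h2⟩
    · exact Or.inl ⟨h1.symm, fun hc => h2 hc.symm⟩
    · exact Or.inr ⟨h1.symm, fun hc => h2 hc.symm⟩⟩
  loopless := ⟨fun x h => by
    rcases h with ⟨h1, _⟩ | ⟨h1, _⟩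
    · exact G.irrefl h1
    · exact G'.irrefl h1⟩

/-- The composition (lexicographic product) `G ⊙ G'`. -/
def comp {V W : Type*} (G : SimpleGraph V) (G' : SimpleGraph W) : SimpleGraph (V × W) where
  Adj x y := G.Adj x.1 y.1 ∨ (x.1 = y.1 ∧ G'.Adj x.2 y.2)
  symm := ⟨fun x y h => by
    rcases h with h | ⟨h1, h2⟩
    · exact Or.inl h.symm
    · exact Or.inr ⟨h1.symm, h2.symm⟩⟩
  loopless := ⟨fun x h => by
    rcases h with h | ⟨_, h2⟩
    · exact G.irrefl h
    · exact G'.irrefl h2⟩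

/-- The blow-up of `G` of order `m`. -/
def blowUp {V : Type*} (G : SimpleGraph V) (m : ℕ) : SimpleGraph (V × Fin m) where
  Adj x y := G.Adj x.1 y.1
  symm := ⟨fun _ _ h => G.adj_symm h⟩
  loopless := ⟨fun _ h => G.irrefl h⟩

/-- Vertex type of the `n`-fold iterated composition. -/
def iterVert (V : Type) : ℕ → Type
  | 0 => PUnit
  | n + 1 => V × iterVert V n

instance iterVertFintype (V : Type) [Fintype V] : (n : ℕ) → Fintype (iterVert V n)
  | 0 => inferInstanceAs (Fintype PUnit)
  | n + 1 => letI := iterVertFintype V n; inferInstanceAs (Fintype (V × iterVert V n))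

/-- The `n`-fold iterated composition `G^{⊙n}` (`n = 0` gives a single vertex). -/
def nestedPow {V : Type} (G : SimpleGraph V) : (n : ℕ) → SimpleGraph (iterVert V n)
  | 0 => (⊥ : SimpleGraph PUnit)
  | n + 1 => comp G (nestedPow G n)

/- Fixed labeled representatives of the 4-vertex isomorphism types. -/
def K3 : SimpleGraph (Fin 3) := ⊤
def K4 : SimpleGraph (Fin 4) := ⊤
def A4 : SimpleGraph (Fin 4) := ⊥
def P4 : SimpleGraph (Fin 4) := SimpleGraph.pathGraph 4
def C4 : SimpleGraph (Fin 4) := SimpleGraph.cycleGraph 4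
def M4 : SimpleGraph (Fin 4) :=
  SimpleGraph.fromRel (fun i j => (i = 0 ∧ j = 1) ∨ (i = 2 ∧ j = 3))
def V4 : SimpleGraph (Fin 4) :=
  SimpleGraph.fromRel (fun i j => (i = 0 ∧ j = 1) ∨ (i = 0 ∧ j = 2))
def Q4 : SimpleGraph (Fin 4) :=
  SimpleGraph.fromRel (fun i j =>
    (i = 0 ∧ j = 1) ∨ (i = 0 ∧ j = 2) ∨ (i = 1 ∧ j = 2) ∨ (i = 0 ∧ j = 3))
def T4 : SimpleGraph (Fin 4) :=
  SimpleGraph.fromRel (fun i j => (i = 0 ∧ j = 1) ∨ (i = 0 ∧ j = 2) ∨ (i = 1 ∧ j = 2))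
def S4 : SimpleGraph (Fin 4) :=
  SimpleGraph.fromRel (fun i j => i = 0 ∧ (j = 1 ∨ j = 2 ∨ j = 3))
def D4 : SimpleGraph (Fin 4) :=
  SimpleGraph.fromRel (fun i j =>
    (i = 0 ∧ j = 1) ∨ (i = 0 ∧ j = 2) ∨ (i = 0 ∧ j = 3) ∨ (i = 1 ∧ j = 2) ∨ (i = 1 ∧ j = 3))
def E4 : SimpleGraph (Fin 4) :=
  SimpleGraph.fromRel (fun i j => i = 0 ∧ j = 1)

end IndPaper



open IndPaper in
private lemma IndPaper.card_prod_pull {V W : Type} [Fintype V] [Fintype W] {t : ℕ}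
    (p : (Fin t → V) → Prop) (q : (Fin t → W) → Prop) :
    Nat.card {f : Fin t → V × W // p (fun i => (f i).1) ∧ q (fun i => (f i).2)} =
      Nat.card {f : Fin t → V // p f} * Nat.card {f : Fin t → W // q f} := by
  rw [← Nat.card_prod]
  exact Nat.card_congr (((Equiv.arrowProdEquivProdArrow (Fin t) (fun _ => V) (fun _ => W)).subtypeEquiv
    (fun f => Iff.rfl)).trans Equiv.subtypeProdEquivProd)

open IndPaper in
private lemma IndPaper.pull_tensor_eq_iff {V W : Type} (G : SimpleGraph V) (G' : SimpleGraph W)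
    {t : ℕ} (H : SimpleGraph (Fin t)) (f : Fin t → V × W) :
    pull (tensor G G') f = H ↔
      ∀ i j : Fin t, H.Adj i j ↔
        Xor' ((pull G (fun i => (f i).1)).Adj i j) ((pull G' (fun i => (f i).2)).Adj i j) := by
  simp only [SimpleGraph.ext_iff, funext_iff, eq_iff_iff]
  constructor
  · intro h i j; exact (h i j).symm
  · intro h i j; exact (h i j).symm

open scoped Classical in
open IndPaper in
/-- The labeled `t`-profile of `G ⊗ G'` is the convolution of the labeled profiles of `G`
and `G'` over the group of labeled `t`-vertex graphs under symmetric difference of edges. -/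
theorem labDensity_tensor_eq_convolution
    {V W : Type} [Fintype V] [Nonempty V] [Fintype W] [Nonempty W]
    (G : SimpleGraph V) (G' : SimpleGraph W) {t : ℕ} (H : SimpleGraph (Fin t)) :
    labDensity H (tensor G G') =
      ∑ H1 : SimpleGraph (Fin t), ∑ H2 : SimpleGraph (Fin t),
        if (∀ i j : Fin t, H.Adj i j ↔ Xor' (H1.Adj i j) (H2.Adj i j)) then
          labDensity H1 G * labDensity H2 G'
        else 0 := by
  classical
  set P : (Fin t → V × W) → Prop := fun f => pull (tensor G G') f = H with hP
  set φ : (Fin t → V × W) → SimpleGraph (Fin t) × SimpleGraph (Fin t) :=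
    fun f => (pull G (fun i => (f i).1), pull G' (fun i => (f i).2)) with hφ
  have key : Nat.card {f : Fin t → V × W // P f} =
      ∑ H1 : SimpleGraph (Fin t), ∑ H2 : SimpleGraph (Fin t),
        if (∀ i j : Fin t, H.Adj i j ↔ Xor' (H1.Adj i j) (H2.Adj i j)) then
          Nat.card {f : Fin t → V // pull G f = H1} * Nat.card {f : Fin t → W // pull G' f = H2}
        else 0 := by
    rw [Nat.card_eq_fintype_card, Fintype.card_subtype]
    rw [Finset.card_eq_sum_card_fiberwise (f := φ) (t := Finset.univ) (fun x _ => Finset.mem_univ _)]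
    rw [Fintype.sum_prod_type]
    refine Finset.sum_congr rfl fun H1 _ => Finset.sum_congr rfl fun H2 _ => ?_
    rw [Finset.filter_filter]
    by_cases hcond : ∀ i j : Fin t, H.Adj i j ↔ Xor' (H1.Adj i j) (H2.Adj i j)
    · rw [if_pos hcond]
      have heq : ∀ f : Fin t → V × W, (P f ∧ φ f = (H1, H2)) ↔
          (pull G (fun i => (f i).1) = H1 ∧ pull G' (fun i => (f i).2) = H2) := by
        intro f
        simp only [hφ, Prod.mk.injEq]
        constructor
        · exact fun h => h.2
        · rintro ⟨h1, h2⟩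
          refine ⟨?_, h1, h2⟩
          show pull (tensor G G') f = H
          rw [IndPaper.pull_tensor_eq_iff]
          intro i j
          rw [h1, h2]
          exact hcond i j
      rw [Finset.filter_congr (fun f _ => heq f)]
      rw [← IndPaper.card_prod_pull (fun g => pull G g = H1) (fun g => pull G' g = H2)]
      rw [Nat.card_eq_fintype_card, Fintype.card_subtype]
    · rw [if_neg hcond]
      rw [Finset.card_eq_zero, Finset.filter_eq_empty_iff]
      rintro f - ⟨hPf, hf⟩
      apply hcond
      intro i j
      have := (IndPaper.pull_tensor_eq_iff G G' H f).mp hPf i j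
      rw [hφ] at hf
      rw [Prod.mk.injEq] at hf
      rw [← hf.1, ← hf.2]
      exact this
  have hD : ((Fintype.card V : ℝ)) ^ t * ((Fintype.card W : ℝ)) ^ t ≠ 0 := by
    positivity
  have step : ∀ H1 H2 : SimpleGraph (Fin t),
      (if (∀ i j : Fin t, H.Adj i j ↔ Xor' (H1.Adj i j) (H2.Adj i j)) then
          labDensity H1 G * labDensity H2 G' else 0) =
      (if (∀ i j : Fin t, H.Adj i j ↔ Xor' (H1.Adj i j) (H2.Adj i j)) then
          ((Nat.card {f : Fin t → V // pull G f = H1} *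
            Nat.card {f : Fin t → W // pull G' f = H2} : ℕ) : ℝ) else 0) /
        ((Fintype.card V : ℝ) ^ t * (Fintype.card W : ℝ) ^ t) := by
    intro H1 H2
    split
    · rw [labDensity, labDensity, div_mul_div_comm]
      push_cast
      ring
    · rw [zero_div]
  calc labDensity H (tensor G G')
      = ((Nat.card {f : Fin t → V × W // P f} : ℕ) : ℝ) /
          ((Fintype.card V : ℝ) ^ t * (Fintype.card W : ℝ) ^ t) := by
        rw [labDensity, Fintype.card_prod]
        push_cast
        rw [mul_pow]
    _ = ∑ H1 : SimpleGraph (Fin t), ∑ H2 : SimpleGraph (Fin t),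
        if (∀ i j : Fin t, H.Adj i j ↔ Xor' (H1.Adj i j) (H2.Adj i j)) then
          labDensity H1 G * labDensity H2 G'
        else 0 := by
        rw [key]
        push_cast
        rw [Finset.sum_div]
        refine Finset.sum_congr rfl fun H1 _ => ?_
        rw [Finset.sum_div]
        refine Finset.sum_congr rfl fun H2 _ => ?_
        rw [step H1 H2]
        push_cast
        rfl
end

section
/- (Thomason) For all finite nonempty simple graphs G and G', and for every labeled graph H on vertex set {1,…,t}: r̂(H, G ⊗ G') = r̂(H, G) · r̂(H, G'). -/
open Filter Topology SimpleGraph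

open IndPaper
open scoped Classical

private lemma IndAux.spectral_eq_sum {V : Type} [Fintype V] {t : ℕ}
    (H : SimpleGraph (Fin t)) (G : SimpleGraph V) :
    spectral H G =
      (∑ f : Fin t → V, (-1 : ℝ) ^ (Nat.card (H ⊓ pull G f).edgeSet)) /
        (Fintype.card V : ℝ) ^ t := by
  classical
  simp only [spectral, labDensity, mul_div_assoc']
  rw [← Finset.sum_div]
  congr 1
  calc ∑ H' : SimpleGraph (Fin t),
        (-1:ℝ)^(Nat.card (H ⊓ H').edgeSet) * (Nat.card {f : Fin t → V // pull G f = H'} : ℝ)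
      = ∑ H' : SimpleGraph (Fin t),
          ∑ f ∈ Finset.univ.filter (fun f : Fin t → V => pull G f = H'),
            (-1:ℝ)^(Nat.card (H ⊓ pull G f).edgeSet) := by
        refine Finset.sum_congr rfl fun H' _ => ?_
        have h1 : (Nat.card {f : Fin t → V // pull G f = H'} : ℝ)
            = ((Finset.univ.filter fun f : Fin t → V => pull G f = H').card : ℝ) := by
          rw [Nat.card_eq_fintype_card, Fintype.card_subtype]
        have h2 : ∑ f ∈ Finset.univ.filter (fun f : Fin t → V => pull G f = H'),
              (-1:ℝ)^(Nat.card (H ⊓ pull G f).edgeSet)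
            = ∑ _f ∈ Finset.univ.filter (fun f : Fin t → V => pull G f = H'),
              (-1:ℝ)^(Nat.card (H ⊓ H').edgeSet) :=
          Finset.sum_congr rfl fun f hf => by rw [(Finset.mem_filter.1 hf).2]
        rw [h1, h2, Finset.sum_const, nsmul_eq_mul, mul_comm]
    _ = ∑ f : Fin t → V, (-1:ℝ)^(Nat.card (H ⊓ pull G f).edgeSet) :=
        Finset.sum_fiberwise _ _ _

private lemma IndAux.negpow_card_inf {t : ℕ} (H X : SimpleGraph (Fin t)) :
    (-1 : ℝ) ^ (Nat.card (H ⊓ X).edgeSet) =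
      ∏ e ∈ H.edgeFinset, (if e ∈ X.edgeFinset then (-1 : ℝ) else 1) := by
  have h1 : Nat.card (H ⊓ X).edgeSet = ((H ⊓ X).edgeFinset).card := by
    rw [Nat.card_eq_fintype_card, SimpleGraph.edgeFinset_card]
  rw [h1, SimpleGraph.edgeFinset_inf, ← Finset.filter_mem_eq_inter, Finset.card_filter,
    ← Finset.prod_pow_eq_pow_sum]
  refine Finset.prod_congr rfl fun e _ => ?_
  by_cases he : e ∈ X.edgeFinset <;> simp [he]

private lemma IndAux.ite_xor (a b : Prop) [Decidable a] [Decidable b] :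
    (if Xor' a b then (-1 : ℝ) else 1)
      = (if a then (-1:ℝ) else 1) * (if b then (-1:ℝ) else 1) := by
  by_cases ha : a <;> by_cases hb : b <;> simp [Xor', ha, hb]

private lemma IndAux.mem_tensor_pull {V W : Type} (G : SimpleGraph V) (G' : SimpleGraph W)
    {t : ℕ} (h : Fin t → V × W) (e : Sym2 (Fin t)) :
    (e ∈ (pull (tensor G G') h).edgeFinset ↔
      Xor' (e ∈ (pull G fun i => (h i).1).edgeFinset)
        (e ∈ (pull G' fun i => (h i).2).edgeFinset)) := by
  induction e using Sym2.ind with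
  | _ i j =>
    simp only [SimpleGraph.mem_edgeFinset, SimpleGraph.mem_edgeSet]
    exact Iff.rfl

open IndPaper in
/-- (Thomason) The spectral profile is multiplicative with respect to the tensor product:
`r̂(H, G ⊗ G') = r̂(H,G) ⬝ r̂(H,G')`. -/
theorem spectral_tensor
    {V W : Type} [Fintype V] [Nonempty V] [Fintype W] [Nonempty W]
    (G : SimpleGraph V) (G' : SimpleGraph W) {t : ℕ} (H : SimpleGraph (Fin t)) :
    spectral H (tensor G G') = spectral H G * spectral H G' := by
  classical
  rw [IndAux.spectral_eq_sum, IndAux.spectral_eq_sum, IndAux.spectral_eq_sum]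
  simp only [IndAux.negpow_card_inf]
  have hs : (∑ h : Fin t → V × W, ∏ e ∈ H.edgeFinset,
        (if e ∈ (pull (tensor G G') h).edgeFinset then (-1:ℝ) else 1))
      = (∑ f : Fin t → V, ∏ e ∈ H.edgeFinset,
          (if e ∈ (pull G f).edgeFinset then (-1:ℝ) else 1))
        * (∑ g : Fin t → W, ∏ e ∈ H.edgeFinset,
          (if e ∈ (pull G' g).edgeFinset then (-1:ℝ) else 1)) := by
    calc (∑ h : Fin t → V × W, ∏ e ∈ H.edgeFinset,
            (if e ∈ (pull (tensor G G') h).edgeFinset then (-1:ℝ) else 1))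
        = ∑ p : (Fin t → V) × (Fin t → W),
            (∏ e ∈ H.edgeFinset, (if e ∈ (pull G p.1).edgeFinset then (-1:ℝ) else 1))
            * (∏ e ∈ H.edgeFinset, (if e ∈ (pull G' p.2).edgeFinset then (-1:ℝ) else 1)) := by
          refine Fintype.sum_equiv (Equiv.arrowProdEquivProdArrow (Fin t) (fun _ => V) (fun _ => W)) _ _ fun h => ?_
          have hfac : ∀ e ∈ H.edgeFinset,
              (if e ∈ (pull (tensor G G') h).edgeFinset then (-1:ℝ) else 1)
                = (if e ∈ (pull G fun i => (h i).1).edgeFinset then (-1:ℝ) else 1)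
                  * (if e ∈ (pull G' fun i => (h i).2).edgeFinset then (-1:ℝ) else 1) := by
            intro e _
            rw [← IndAux.ite_xor]
            congr 1
            simp only [IndAux.mem_tensor_pull G G' h e]
          rw [Finset.prod_congr rfl hfac, Finset.prod_mul_distrib]
          rfl
      _ = ∑ f : Fin t → V, ∑ g : Fin t → W,
            (∏ e ∈ H.edgeFinset, (if e ∈ (pull G f).edgeFinset then (-1:ℝ) else 1))
            * (∏ e ∈ H.edgeFinset, (if e ∈ (pull G' g).edgeFinset then (-1:ℝ) else 1)) :=
          Fintype.sum_prod_type
            (fun p : (Fin t → V) × (Fin t → W) =>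
              (∏ e ∈ H.edgeFinset, (if e ∈ (pull G p.1).edgeFinset then (-1:ℝ) else 1))
              * (∏ e ∈ H.edgeFinset, (if e ∈ (pull G' p.2).edgeFinset then (-1:ℝ) else 1)))
      _ = _ := (Finset.sum_mul_sum Finset.univ Finset.univ _ _).symm
  rw [hs, Fintype.card_prod, Nat.cast_mul, mul_pow, div_mul_div_comm]
end

section
/- Let t ≥ 2, let H' be a vertex-transitive finite simple graph on t+1 vertices (its automorphism group acts transitively on the vertices), and let H be the graph obtained from H' by deleting a single vertex. Then I(H) ≥ t! / ((t+1)^{t−1} − 1). -/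
open Filter Topology SimpleGraph

namespace IndProof
open IndPaper

/-- Isomorphism of induced subgraphs from a graph isomorphism. -/
def isoInduce {α β : Type*} {G : SimpleGraph α} {G' : SimpleGraph β} (e : G ≃g G') (s : Set α) :
    G.induce s ≃g G'.induce (e '' s) where
  toEquiv := e.toEquiv.image s
  map_rel_iff' := by
    intro a b
    simp only [Equiv.image, comap_adj, Function.Embedding.coe_subtype, Equiv.coe_fn_mk]
    exact e.map_rel_iff

/-- The number of `t`-subsets inducing a copy of `H`. -/
noncomputable def cop {t : ℕ} (H : SimpleGraph (Fin t)) {α : Type*} [Fintype α]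
    (G : SimpleGraph α) : ℕ :=
  Nat.card {s : Finset α // s.card = t ∧ Nonempty (G.induce (↑s : Set α) ≃g H)}

lemma cop_congr {t : ℕ} (H : SimpleGraph (Fin t)) {α β : Type*} [Fintype α] [Fintype β]
    {G : SimpleGraph α} {G' : SimpleGraph β} (e : G ≃g G') : cop H G = cop H G' := by
  apply Nat.card_congr
  refine Equiv.subtypeEquiv (e.toEquiv.finsetCongr) ?_
  intro s
  have hcoe : ↑(e.toEquiv.finsetCongr s) = e.toEquiv '' (↑s : Set α) := by
    simp [Equiv.finsetCongr, Finset.coe_map]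
  constructor
  · rintro ⟨hc, ⟨f⟩⟩
    refine ⟨by simp [hc], ⟨?_⟩⟩
    rw [hcoe]
    exact ((isoInduce e (↑s : Set α)).symm.trans f)
  · rintro ⟨hc, ⟨f⟩⟩
    refine ⟨by simpa using hc, ⟨?_⟩⟩
    rw [hcoe] at f
    exact (isoInduce e (↑s : Set α)).trans f

lemma hdel_all {t : ℕ} {H' : SimpleGraph (Fin (t + 1))}
    (htrans : ∀ u v : Fin (t + 1), ∃ e : H' ≃g H', e u = v)
    {H : SimpleGraph (Fin t)}
    (hH : ∃ v : Fin (t + 1), Nonempty (H ≃g H'.induce {w : Fin (t + 1) | w ≠ v})) :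
    ∀ v : Fin (t + 1), Nonempty (H'.induce {w : Fin (t + 1) | w ≠ v} ≃g H) := by
  obtain ⟨v₀, ⟨f⟩⟩ := hH
  intro v
  obtain ⟨e, he⟩ := htrans v v₀
  have himg : ⇑e '' {w : Fin (t+1) | w ≠ v} = {w : Fin (t+1) | w ≠ v₀} := by
    ext x
    simp only [Set.mem_image, Set.mem_setOf_eq]
    constructor
    · rintro ⟨y, hy, rfl⟩
      rw [← he]
      exact fun h => hy (e.injective h)
    · intro hx
      refine ⟨e.symm x, ?_, e.apply_symm_apply x⟩
      intro h
      exact hx (by rw [← he, ← h]; exact (e.apply_symm_apply x).symm)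
  have i1 := isoInduce e {w : Fin (t+1) | w ≠ v}
  rw [himg] at i1
  exact ⟨(i1.trans f.symm)⟩

section
variable {t : ℕ} {α : Type*}

def sectEmb (i : Fin (t+1)) : α ↪ Fin (t+1) × α :=
  ⟨fun x => (i, x), fun a b h => congrArg Prod.snd h⟩

def crossEmb (v : Fin (t+1)) (g : {u : Fin (t+1) // u ≠ v} → α) :
    {u : Fin (t+1) // u ≠ v} ↪ Fin (t+1) × α :=
  ⟨fun u => ((u : Fin (t+1)), g u), fun a b h => Subtype.ext (congrArg Prod.fst h)⟩

lemma mem_crossSet {v : Fin (t+1)} {g : {u : Fin (t+1) // u ≠ v} → α} {y : Fin (t+1) × α} :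
    y ∈ Finset.univ.map (crossEmb v g) ↔ ∃ h : y.1 ≠ v, y.2 = g ⟨y.1, h⟩ := by
  simp only [Finset.mem_map, Finset.mem_univ, true_and, crossEmb, Function.Embedding.coeFn_mk]
  constructor
  · rintro ⟨u, rfl⟩; exact ⟨u.2, rfl⟩
  · rintro ⟨h, hy⟩; exact ⟨⟨y.1, h⟩, Prod.ext rfl hy.symm⟩

lemma cop_comp_ge (ht : 2 ≤ t) {H' : SimpleGraph (Fin (t+1))} {H : SimpleGraph (Fin t)}
    (hdel : ∀ v : Fin (t+1), Nonempty (H'.induce {w : Fin (t+1) | w ≠ v} ≃g H))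
    [Fintype α] (G : SimpleGraph α) :
    (t+1) * cop H G + (t+1) * (Fintype.card α)^t ≤ cop H (IndPaper.comp H' G) := by
  classical
  set C := IndPaper.comp H' G with hCdef
  have hcardsub : ∀ v : Fin (t+1), Fintype.card {u : Fin (t+1) // u ≠ v} = t := by
    intro v
    have := Fintype.card_subtype_compl (p := fun u : Fin (t+1) => u = v)
    simpa [Fintype.card_subtype_eq] using this
  have iso1 : ∀ (i : Fin (t+1)) (s : Finset α),
      Nonempty (C.induce (↑(s.map (sectEmb i)) : Set (Fin (t+1) × α)) ≃g G.induce (↑s : Set α)) := by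
    intro i s
    have hcoe : (↑(s.map (sectEmb i)) : Set (Fin (t+1) × α)) = (fun x => (i,x)) '' (↑s : Set α) :=
      Finset.coe_map _ _
    rw [hcoe]
    refine ⟨(RelIso.symm ⟨Equiv.Set.image _ (↑s : Set α) (sectEmb i).injective, ?_⟩)⟩
    intro a b
    simp only [Equiv.Set.image, Equiv.Set.imageOfInjOn, comap_adj,
      Function.Embedding.coe_subtype, Equiv.coe_fn_mk, hCdef, IndPaper.comp, SimpleGraph.irrefl]
    tauto
  have iso2 : ∀ (v : Fin (t+1)) (g : {u : Fin (t+1) // u ≠ v} → α),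
      Nonempty (C.induce (↑(Finset.univ.map (crossEmb v g)) : Set (Fin (t+1) × α)) ≃g
        H'.induce {w : Fin (t+1) | w ≠ v}) := by
    intro v g
    refine ⟨⟨⟨fun x => ⟨x.1.1, (mem_crossSet.mp x.2).1⟩,
              fun u => ⟨(u.1, g ⟨u.1, u.2⟩), mem_crossSet.mpr ⟨u.2, rfl⟩⟩, ?_, ?_⟩, ?_⟩⟩
    · intro x
      apply Subtype.ext
      obtain ⟨h, hy⟩ := mem_crossSet.mp x.2
      exact Prod.ext rfl hy.symm
    · intro u
      exact Subtype.ext rfl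
    · intro a b
      obtain ⟨ha1, ha2⟩ := mem_crossSet.mp a.2
      obtain ⟨hb1, hb2⟩ := mem_crossSet.mp b.2
      simp only [comap_adj, Function.Embedding.coe_subtype, Equiv.coe_fn_mk, hCdef, IndPaper.comp]
      constructor
      · exact fun h => Or.inl h
      · rintro (h | ⟨h1, h2⟩)
        · exact h
        · exfalso
          rw [ha2, hb2] at h2
          have : (⟨a.1.1, ha1⟩ : {u : Fin (t+1) // u ≠ v}) = ⟨b.1.1, hb1⟩ := Subtype.ext h1
          rw [this] at h2
          exact G.irrefl h2
  set D := (Fin (t+1) × {s : Finset α // s.card = t ∧ Nonempty (G.induce (↑s : Set α) ≃g H)}) ⊕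
      ((v : Fin (t+1)) × ({u : Fin (t+1) // u ≠ v} → α)) with hDdef
  set Ψ : D → Finset (Fin (t+1) × α) :=
    Sum.elim (fun p => p.2.1.map (sectEmb p.1)) (fun q => Finset.univ.map (crossEmb q.1 q.2))
    with hΨ
  have key : ∀ (i : Fin (t+1)) (s : Finset α), 1 < s.card → ∀ (v : Fin (t+1)) g,
      s.map (sectEmb i) ≠ Finset.univ.map (crossEmb v g) := by
    intro i s hs v g h
    obtain ⟨a, ha, b, hb, hab⟩ := Finset.one_lt_card.mp hs
    have hma : (i, a) ∈ Finset.univ.map (crossEmb v g) := by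
      rw [← h]; exact Finset.mem_map_of_mem _ ha
    have hmb : (i, b) ∈ Finset.univ.map (crossEmb v g) := by
      rw [← h]; exact Finset.mem_map_of_mem _ hb
    obtain ⟨h1, h2⟩ := mem_crossSet.mp hma
    obtain ⟨h1', h2'⟩ := mem_crossSet.mp hmb
    apply hab
    simp only at h2 h2'
    rw [h2, h2']
  have hΨinj : Function.Injective Ψ := by
    rintro (⟨i, s, hs, hi⟩ | ⟨v, g⟩) (⟨i', s', hs', hi'⟩ | ⟨v', g'⟩) h <;>
      simp only [hΨ, Sum.elim_inl, Sum.elim_inr] at h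
    · have hne : s.Nonempty := by rw [← Finset.card_pos, hs]; omega
      obtain ⟨a, ha⟩ := hne
      have : (i, a) ∈ s'.map (sectEmb i') := by rw [← h]; exact Finset.mem_map_of_mem _ ha
      obtain ⟨b, hb, hba⟩ := Finset.mem_map.mp this
      have hii : i' = i := congrArg Prod.fst hba
      subst hii
      have := Finset.map_injective _ h
      exact congrArg Sum.inl (Prod.ext rfl (Subtype.ext this))
    · exact absurd h (key i s (by omega) v' g')
    · exact absurd h.symm (key i' s' (by omega) v g)
    · have hvv : v = v' := by
        by_contra hvv
        have : (v', g ⟨v', Ne.symm hvv⟩) ∈ Finset.univ.map (crossEmb v' g') := by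
          rw [← h]; exact mem_crossSet.mpr ⟨Ne.symm hvv, rfl⟩
        obtain ⟨hc, -⟩ := mem_crossSet.mp this
        exact hc rfl
      subst hvv
      have hgg : g = g' := by
        funext u
        have : (u.1, g u) ∈ Finset.univ.map (crossEmb v g') := by
          rw [← h]; exact mem_crossSet.mpr ⟨u.2, rfl⟩
        obtain ⟨hc, hc2⟩ := mem_crossSet.mp this
        simpa using hc2
      rw [hgg]
  have hmapsto : ∀ x : D, (Ψ x).card = t ∧ Nonempty (C.induce (↑(Ψ x) : Set (Fin (t+1) × α)) ≃g H) := by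
    rintro (⟨i, s, hs, hi⟩ | ⟨v, g⟩)
    · refine ⟨by simp [hΨ, hs], ?_⟩
      exact (iso1 i s).elim fun e => hi.elim fun f => ⟨e.trans f⟩
    · refine ⟨by simp [hΨ, hcardsub v], ?_⟩
      exact (iso2 v g).elim fun e => (hdel v).elim fun f => ⟨e.trans f⟩
  have hinj : Function.Injective (fun x : D =>
      (⟨Ψ x, hmapsto x⟩ : {s : Finset (Fin (t+1) × α) //
        s.card = t ∧ Nonempty (C.induce (↑s : Set (Fin (t+1) × α)) ≃g H)})) := by
    intro x y h
    exact hΨinj (congrArg Subtype.val h)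
  have hle := Nat.card_le_card_of_injective _ hinj
  have hcardD : Nat.card D = (t+1) * cop H G + (t+1) * (Fintype.card α)^t := by
    simp only [hDdef, Nat.card_eq_fintype_card, Fintype.card_sum, Fintype.card_prod,
      Fintype.card_fin, Fintype.card_sigma, Fintype.card_fun, hcardsub, cop,
      Finset.sum_const, Finset.card_univ, smul_eq_mul]
  rw [hcardD] at hle
  exact hle

end

lemma card_iterVert (V : Type) [Fintype V] (k : ℕ) :
    Fintype.card (IndPaper.iterVert V k) = (Fintype.card V)^k := by
  induction k with
  | zero =>
    rw [← Nat.card_eq_fintype_card]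
    show Nat.card PUnit = _
    simp
  | succ k ih =>
    rw [← Nat.card_eq_fintype_card] at ih ⊢
    show Nat.card (V × IndPaper.iterVert V k) = _
    rw [Nat.card_prod, ih, pow_succ, Nat.card_eq_fintype_card]
    ring

lemma key_nat {t : ℕ} (ht : 2 ≤ t) {H' : SimpleGraph (Fin (t+1))} {H : SimpleGraph (Fin t)}
    (hdel : ∀ v : Fin (t+1), Nonempty (H'.induce {w : Fin (t+1) | w ≠ v} ≃g H)) (k : ℕ) :
    ((t+1)^k)^t ≤ ((t+1)^(t-1) - 1) * cop H (IndPaper.nestedPow H' k) + (t+1)^k := by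
  induction k with
  | zero => simp
  | succ k ih =>
    have hstep := cop_comp_ge ht hdel (IndPaper.nestedPow H' k)
    rw [card_iterVert, Fintype.card_fin] at hstep
    have hcomp : cop H (IndPaper.comp H' (IndPaper.nestedPow H' k)) =
        cop H (IndPaper.nestedPow H' (k+1)) := rfl
    rw [hcomp] at hstep
    set A := (t+1)^(t-1) - 1 with hAdef
    set ck := cop H (IndPaper.nestedPow H' k)
    set ck' := cop H (IndPaper.nestedPow H' (k+1))
    set N := ((t+1)^k)^t with hNdef
    have hA1 : A + 1 = (t+1)^(t-1) := Nat.succ_pred_eq_of_pos (Nat.pow_pos (by omega))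
    have hpow : (t+1)^t = (t+1) * (t+1)^(t-1) := by
      rw [← pow_succ']; congr 1; omega
    have hgoal : ((t+1)^(k+1))^t = (t+1)^t * N := by
      rw [hNdef, pow_succ, mul_pow]; ring
    rw [hgoal]
    have h1 : (t+1) * N ≤ (t+1) * A * ck + (t+1) * (t+1)^k := by
      calc (t+1) * N ≤ (t+1) * (A * ck + (t+1)^k) := Nat.mul_le_mul_left _ ih
      _ = (t+1) * A * ck + (t+1) * (t+1)^k := by ring
    calc (t+1)^t * N = ((t+1) * (A+1)) * N := by rw [hpow, ← hA1]
    _ = (t+1) * N + A * ((t+1) * N) := by ring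
    _ ≤ ((t+1) * A * ck + (t+1) * (t+1)^k) + A * ((t+1) * N) := by omega
    _ = A * ((t+1) * ck + (t+1) * N) + (t+1)^(k+1) := by rw [pow_succ]; ring
    _ ≤ A * ck' + (t+1)^(k+1) := by
        have := Nat.mul_le_mul_left A hstep
        omega

lemma cop_le {t : ℕ} (H : SimpleGraph (Fin t)) {α : Type*} [Fintype α] (G : SimpleGraph α) :
    cop H G ≤ (Fintype.card α).choose t := by
  classical
  have h := Nat.card_le_card_of_injective
    (fun x : {s : Finset α // s.card = t ∧ Nonempty (G.induce (↑s : Set α) ≃g H)} =>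
      (⟨x.1, x.2.1⟩ : {s : Finset α // s.card = t}))
    (by intro a b hab
        have h2 : (⟨a.1, a.2.1⟩ : {s : Finset α // s.card = t}).val
            = (⟨b.1, b.2.1⟩ : {s : Finset α // s.card = t}).val := congrArg Subtype.val hab
        exact Subtype.ext h2)
  rw [Nat.card_eq_fintype_card (α := {s : Finset α // s.card = t}),
    Fintype.card_finset_len] at h
  exact h

lemma subsetDensity_eq {t : ℕ} (H : SimpleGraph (Fin t)) {α : Type*} [Fintype α]
    (G : SimpleGraph α) :
    subsetDensity H G = (cop H G : ℝ) / ((Fintype.card α).choose t : ℝ) := rfl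

lemma subsetDensity_nonneg {t : ℕ} (H : SimpleGraph (Fin t)) {α : Type*} [Fintype α]
    (G : SimpleGraph α) : 0 ≤ subsetDensity H G := by
  rw [subsetDensity_eq]
  positivity

lemma subsetDensity_le_one {t : ℕ} (H : SimpleGraph (Fin t)) {α : Type*} [Fintype α]
    (G : SimpleGraph α) : subsetDensity H G ≤ 1 := by
  rw [subsetDensity_eq]
  rcases Nat.eq_zero_or_pos ((Fintype.card α).choose t) with h | h
  · have hc := cop_le H G
    rw [h] at hc
    simp [Nat.le_zero.mp hc, h]
  · rw [div_le_one (by exact_mod_cast h)]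
    exact_mod_cast cop_le H G

lemma le_maxDensity {t n : ℕ} (H : SimpleGraph (Fin t)) (G : SimpleGraph (Fin n)) :
    subsetDensity H G ≤ maxDensity H n :=
  le_csSup ⟨1, by rintro x ⟨G', rfl⟩; exact subsetDensity_le_one H G'⟩ ⟨G, rfl⟩

lemma maxDensity_le_one {t : ℕ} (H : SimpleGraph (Fin t)) (n : ℕ) : maxDensity H n ≤ 1 :=
  csSup_le ⟨_, ⟨⊥, rfl⟩⟩ (by rintro x ⟨G', rfl⟩; exact subsetDensity_le_one H G')

end IndProof


open IndPaper in
/-- If `H'` is a vertex-transitive graph on `t+1` vertices (`t ≥ 2`) and `H` is obtained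
from `H'` by deleting a single vertex, then `I(H) ≥ t!/((t+1)^{t−1} − 1)`. -/
theorem inducibility_of_vertexTransitive_delete
    {t : ℕ} (ht : 2 ≤ t) (H' : SimpleGraph (Fin (t + 1)))
    (htrans : ∀ u v : Fin (t + 1), ∃ e : H' ≃g H', e u = v)
    (H : SimpleGraph (Fin t))
    (hH : ∃ v : Fin (t + 1), Nonempty (H ≃g H'.induce {w : Fin (t + 1) | w ≠ v})) :
    (Nat.factorial t : ℝ) / (((t : ℝ) + 1) ^ (t - 1) - 1) ≤ inducibility H := by
  classical
  have hdel := IndProof.hdel_all htrans hH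
  set L : ℝ := (Nat.factorial t : ℝ) / (((t : ℝ) + 1) ^ (t - 1) - 1) with hLdef
  have htR : (2:ℝ) ≤ (t:ℝ) := by exact_mod_cast ht
  have hA_pos : (0:ℝ) < ((t:ℝ)+1)^(t-1) - 1 := by
    have h1 : (2:ℝ) ≤ ((t:ℝ)+1)^(t-1) := by
      calc (2:ℝ) ≤ (t:ℝ)+1 := by linarith
      _ = ((t:ℝ)+1)^1 := (pow_one _).symm
      _ ≤ ((t:ℝ)+1)^(t-1) := pow_le_pow_right₀ (by linarith) (by omega)
    linarith
  have hL_nonneg : 0 ≤ L := div_nonneg (Nat.cast_nonneg _) hA_pos.le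
  have hmain : ∀ k : ℕ, t ≤ (t+1)^k →
      L - L / (((t+1)^k : ℕ) : ℝ) ≤ maxDensity H ((t+1)^k) := by
    intro k hk
    set n := (t+1)^k with hn
    have hcard : Fintype.card (IndPaper.iterVert (Fin (t+1)) k) = n := by
      rw [IndProof.card_iterVert, Fintype.card_fin]
    set Gk := (IndPaper.nestedPow H' k).overFin hcard with hGk
    have hcop : IndProof.cop H (IndPaper.nestedPow H' k) = IndProof.cop H Gk :=
      IndProof.cop_congr H ((IndPaper.nestedPow H' k).overFinIso hcard)
    have hdens : subsetDensity H Gk = (IndProof.cop H Gk : ℝ) / ((n.choose t : ℕ) : ℝ) := by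
      rw [IndProof.subsetDensity_eq, Fintype.card_fin]
    have hkey := IndProof.key_nat ht hdel k
    rw [← hn] at hkey
    set c := IndProof.cop H (IndPaper.nestedPow H' k) with hc
    have hCpos : 0 < n.choose t := Nat.choose_pos hk
    have hfac : (t.factorial) * (n.choose t) ≤ n^t := by
      calc t.factorial * n.choose t = n.descFactorial t :=
        (Nat.descFactorial_eq_factorial_mul_choose n t).symm
      _ ≤ n^t := Nat.descFactorial_le_pow n t
    have hn1 : 1 ≤ n := Nat.one_le_pow _ _ (by omega)
    have hnt : n ≤ n^(t-1) := Nat.le_self_pow (by omega) n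
    have hsplit : ((n:ℝ))^t = (n:ℝ)^(t-1) * (n:ℝ) := by
      rw [← pow_succ, Nat.sub_add_cancel (show 1 ≤ t by omega)]
    have f1 : (t.factorial : ℝ) * (n.choose t : ℝ) ≤ (n:ℝ)^(t-1) * (n:ℝ) := by
      rw [← hsplit]
      exact_mod_cast hfac
    have f2 : (n:ℝ)^(t-1) * (n:ℝ) ≤ (((t:ℝ)+1)^(t-1) - 1) * (c:ℝ) + (n:ℝ) := by
      have f2' : ((n^t : ℕ):ℝ) ≤ ((((t+1)^(t-1) - 1) * c + n : ℕ) : ℝ) := Nat.cast_le.mpr hkey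
      push_cast [Nat.cast_sub (Nat.one_le_pow (t-1) (t+1) (by omega))] at f2'
      rw [hsplit] at f2'
      exact f2'
    have f3 : (n:ℝ) ≤ (n:ℝ)^(t-1) := by exact_mod_cast hnt
    have f4 : (1:ℝ) ≤ (n:ℝ) := by exact_mod_cast hn1
    have f5 : (0:ℝ) < (n.choose t : ℝ) := by exact_mod_cast hCpos
    have hnpos : (0:ℝ) < (n:ℝ) := by linarith
    have target : L - L/(n:ℝ) ≤ (c:ℝ) / (n.choose t : ℝ) := by
      have step1 : L - L/(n:ℝ)
          = (t.factorial : ℝ) * ((n:ℝ) - 1) / (((((t:ℝ)+1)^(t-1) - 1)) * (n:ℝ)) := by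
        rw [hLdef]
        field_simp
      rw [step1, div_le_div_iff₀ (by positivity) f5]
      nlinarith [mul_le_mul_of_nonneg_right f1 (sub_nonneg.mpr f4),
        mul_le_mul_of_nonneg_right f2 hnpos.le,
        mul_le_mul_of_nonneg_right f3 hnpos.le,
        mul_le_mul_of_nonneg_right f2 (sub_nonneg.mpr f4)]
    calc L - L / ((n : ℕ) : ℝ) ≤ (c:ℝ) / (n.choose t : ℝ) := target
    _ = subsetDensity H Gk := by rw [hdens, ← hcop]
    _ ≤ maxDensity H n := IndProof.le_maxDensity H Gk
  have hbdd : Filter.IsBoundedUnder (· ≤ ·) Filter.atTop (fun n => maxDensity H n) :=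
    Filter.isBoundedUnder_of ⟨1, fun n => IndProof.maxDensity_le_one H n⟩
  have key : ∀ ε : ℝ, 0 < ε → L - ε ≤ inducibility H := by
    intro ε hε
    have htend : Filter.Tendsto (fun k : ℕ => (t+1)^k) Filter.atTop Filter.atTop :=
      tendsto_pow_atTop_atTop_of_one_lt (by omega)
    have hev1 : ∀ᶠ k in Filter.atTop, t ≤ (t+1)^k := htend.eventually_ge_atTop t
    have htendR : Filter.Tendsto (fun k : ℕ => (((t+1)^k : ℕ) : ℝ)) Filter.atTop Filter.atTop :=
      Filter.Tendsto.comp tendsto_natCast_atTop_atTop htend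
    have htend2 : Filter.Tendsto (fun k : ℕ => L / (((t+1)^k : ℕ) : ℝ))
        Filter.atTop (nhds 0) := Filter.Tendsto.div_atTop tendsto_const_nhds htendR
    have hev2 : ∀ᶠ k in Filter.atTop, L / (((t+1)^k : ℕ) : ℝ) ≤ ε :=
      (htend2.eventually_lt_const hε).mono fun k h => le_of_lt h
    have hev : ∀ᶠ k in Filter.atTop, L - ε ≤ maxDensity H ((t+1)^k) := by
      filter_upwards [hev1, hev2] with k h1 h2
      have := hmain k h1
      linarith
    have hfreq : ∃ᶠ n in Filter.atTop, L - ε ≤ maxDensity H n :=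
      htend.frequently hev.frequently
    exact Filter.le_limsup_of_frequently_le hfreq hbdd
  by_contra hcon
  push_neg at hcon
  have h2 := key ((L - inducibility H)/2) (by linarith)
  linarith
end

section
/- For every t ≥ 5, the inducibility of the path P_t on t vertices satisfies I(P_t) ≤ t! / (2 (t−1)^{t−1}). -/
open Filter Topology SimpleGraph

namespace IndProofAux
open IndPaper Finset
open scoped Classical

/-- AM-GM in the form we need. -/
lemma amgm (k : ℕ) {a m : ℝ} (h0 : 0 ≤ a) (ham : a ≤ m) :
    a * ((m - a) / k) ^ k ≤ (m / (k + 1)) ^ (k + 1) := by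
  rcases Nat.eq_zero_or_pos k with rfl | hkpos
  · simpa using ham
  · have hk0 : (0:ℝ) < k := by exact_mod_cast hkpos
    have hk1 : (0:ℝ) < (k:ℝ) + 1 := by positivity
    have hma : (0:ℝ) ≤ m - a := by linarith
    set u : ℝ := ((k:ℝ)+1) * a with hu
    set v : ℝ := ((k:ℝ)+1) * (m - a) / k with hv
    have hu0 : 0 ≤ u := by positivity
    have hv0 : 0 ≤ v := by positivity
    have hsum : 1/((k:ℝ)+1) + (k:ℝ)/((k:ℝ)+1) = 1 := by field_simp; ring
    have young := Real.geom_mean_le_arith_mean2_weighted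
      (by positivity) (by positivity) hu0 hv0 hsum
    have hknz : (k:ℝ) ≠ 0 := ne_of_gt hk0
    have hrhs : 1/((k:ℝ)+1) * u + (k:ℝ)/((k:ℝ)+1) * v = m := by
      have e1 : 1/((k:ℝ)+1) * u = a := by rw [hu]; field_simp
      have e2 : (k:ℝ)/((k:ℝ)+1) * v = m - a := by rw [hv]; field_simp
      rw [e1, e2]; ring
    rw [hrhs] at young
    have hpow := pow_le_pow_left₀ (by positivity) young (k+1)
    have hid : (u ^ (1/((k:ℝ)+1)) * v ^ ((k:ℝ)/((k:ℝ)+1))) ^ (k+1) = u * v ^ k := by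
      rw [mul_pow, ← Real.rpow_natCast (u ^ (1/((k:ℝ)+1))) (k+1),
        ← Real.rpow_natCast (v ^ ((k:ℝ)/((k:ℝ)+1))) (k+1),
        ← Real.rpow_mul hu0, ← Real.rpow_mul hv0]
      have e1 : 1/((k:ℝ)+1) * ((k+1 : ℕ) : ℝ) = 1 := by push_cast; field_simp
      have e2 : (k:ℝ)/((k:ℝ)+1) * ((k+1 : ℕ) : ℝ) = ((k:ℕ) : ℝ) := by push_cast; field_simp
      rw [e1, e2, Real.rpow_one, Real.rpow_natCast]
    rw [hid] at hpow
    rw [div_pow, div_pow, le_div_iff₀ (by positivity)]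
    calc a * ((m - a) ^ k / (k:ℝ) ^ k) * ((k:ℝ) + 1) ^ (k + 1)
        = u * v ^ k := by
          rw [hu, hv, div_pow, mul_pow]
          field_simp
          ring
      _ ≤ m ^ (k+1) := hpow

variable {V : Type*} [Fintype V] [DecidableEq V]

/-- neighbourhood as a Finset (classical). -/
noncomputable def nb (G : SimpleGraph V) (u : V) : Finset V :=
  Finset.univ.filter fun v => G.Adj u v

lemma mem_nb {G : SimpleGraph V} {u v : V} : v ∈ nb G u ↔ G.Adj u v := by
  simp [nb]

/-- The recursive family of extension sets. -/
noncomputable def GF (G : SimpleGraph V) : (k : ℕ) → Finset V → V → Finset (Fin k → V)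
  | 0, _, _ => Finset.univ
  | (k+1), B, u => (nb G u \ B).biUnion fun w =>
      (GF G k (B ∪ nb G u ∪ {u}) w).image (Fin.cons w)

lemma GF_card (G : SimpleGraph V) :
    ∀ (k : ℕ) (B : Finset V) (u : V),
      ((GF G k B u).card : ℝ) ≤ (((Finset.univ \ B).card : ℝ) / k) ^ k
  | 0, B, u => by simp [GF]
  | (k+1), B, u => by
    classical
    set B' : Finset V := B ∪ nb G u ∪ {u} with hB'
    set A : Finset V := nb G u \ B with hA
    set m : ℕ := ((Finset.univ : Finset V) \ B).card with hm
    have hAm : A.card ≤ m := by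
      apply Finset.card_le_card; intro x hx
      rw [hA, Finset.mem_sdiff] at hx
      simp [hx.2]
    have hdisj : Disjoint ((Finset.univ : Finset V) \ B') A := by
      rw [Finset.disjoint_left]
      intro x hx hxA
      rw [Finset.mem_sdiff] at hx
      refine hx.2 ?_
      rw [hB']
      have : x ∈ nb G u := (Finset.mem_sdiff.1 hxA).1
      simp [Finset.mem_union, this]
    have hsub : ((Finset.univ : Finset V) \ B') ∪ A ⊆ (Finset.univ : Finset V) \ B := by
      intro x hx
      rcases Finset.mem_union.1 hx with hx | hx
      · rw [Finset.mem_sdiff] at hx ⊢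
        refine ⟨hx.1, fun hB => hx.2 ?_⟩
        rw [hB']; simp [Finset.mem_union, hB]
      · rw [Finset.mem_sdiff] at hx ⊢
        exact ⟨Finset.mem_univ _, hx.2⟩
    have hcard : ((Finset.univ : Finset V) \ B').card + A.card ≤ m := by
      rw [← Finset.card_union_of_disjoint hdisj]
      exact Finset.card_le_card hsub
    have hB'le : (((Finset.univ : Finset V) \ B').card : ℝ) ≤ (m : ℝ) - (A.card : ℝ) := by
      rw [le_sub_iff_add_le]
      exact_mod_cast hcard
    have hnat : (GF G (k+1) B u).card ≤ ∑ w ∈ A, (GF G k B' w).card := by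
      refine le_trans Finset.card_biUnion_le ?_
      exact Finset.sum_le_sum fun w _ => Finset.card_image_le
    calc ((GF G (k+1) B u).card : ℝ)
        ≤ ∑ w ∈ A, ((GF G k B' w).card : ℝ) := by exact_mod_cast hnat
      _ ≤ ∑ _w ∈ A, (((m : ℝ) - (A.card : ℝ)) / k) ^ k := by
          refine Finset.sum_le_sum fun w _ => ?_
          refine le_trans (GF_card G k B' w) ?_
          refine pow_le_pow_left₀ (by positivity) ?_ k
          rw [div_eq_mul_inv, div_eq_mul_inv]
          exact mul_le_mul_of_nonneg_right hB'le (by positivity)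
      _ = (A.card : ℝ) * (((m : ℝ) - (A.card : ℝ)) / k) ^ k := by
          rw [Finset.sum_const, nsmul_eq_mul]
      _ ≤ ((m : ℝ) / (k + 1)) ^ (k + 1) := by
          refine amgm k (by positivity) ?_
          exact_mod_cast hAm
      _ = ((m : ℝ) / ((k+1 : ℕ) : ℝ)) ^ (k + 1) := by push_cast; ring

/-- Membership criterion for `GF`. -/
lemma mem_GF (G : SimpleGraph V) :
    ∀ (k : ℕ) (B : Finset V) (F : Fin (k+1) → V),
      (∀ a : Fin k, G.Adj (F a.castSucc) (F a.succ)) →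
      (∀ a b : Fin (k+1), (a:ℕ) + 2 ≤ (b:ℕ) → ¬ G.Adj (F a) (F b)) →
      Function.Injective F →
      (∀ a : Fin (k+1), (a:ℕ) ≠ 0 → F a ∉ B) →
      (fun j : Fin k => F j.succ) ∈ GF G k B (F 0)
  | 0, B, F, h1, h2, h3, h4 => by
    simp only [GF]; exact Finset.mem_univ _
  | (k+1), B, F, h1, h2, h3, h4 => by
    classical
    rw [GF, Finset.mem_biUnion]
    refine ⟨F 1, ?_, ?_⟩
    · rw [Finset.mem_sdiff, mem_nb]
      constructor
      · have := h1 0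
        simpa using this
      · exact h4 1 (by simp)
    · rw [Finset.mem_image]
      refine ⟨fun j : Fin k => F j.succ.succ, ?_, ?_⟩
      · have key := mem_GF G k (B ∪ nb G (F 0) ∪ {F 0}) (fun i : Fin (k+1) => F i.succ)
          (fun a => by
            have := h1 a.succ
            rwa [← Fin.succ_castSucc] at this)
          (fun a b hab => by
            refine h2 a.succ b.succ ?_
            simp only [Fin.val_succ]; omega)
          (fun x y hxy => by
            have : x.succ = y.succ := h3 hxy
            exact Fin.succ_injective _ this)
          (fun a ha => by
            have hval : 2 ≤ ((a.succ : Fin (k+2)) : ℕ) := by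
              have : (a:ℕ) ≠ 0 := ha
              simp [Fin.val_succ]; omega
            simp only [Finset.mem_union, Finset.mem_singleton, mem_nb]
            push_neg
            refine ⟨⟨h4 a.succ (by omega), ?_⟩, ?_⟩
            · exact h2 0 a.succ (by simpa using hval)
            · intro hEq
              have : a.succ = 0 := h3 hEq
              exact Fin.succ_ne_zero a this)
        have h0 : (fun i : Fin (k+1) => F i.succ) 0 = F 1 := by
          simp
        rwa [Fin.succ_zero_eq_one] at key
      · funext j
        refine Fin.cases ?_ ?_ j
        · simp
        · intro i
          simp [Fin.cons_succ]

/-- The count of injective maps realizing the path. -/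
lemma path_count (G : SimpleGraph V) (k : ℕ) :
    (Nat.card {f : Fin (k+1) → V //
        Function.Injective f ∧ pull G f = SimpleGraph.pathGraph (k+1)} : ℝ)
      ≤ (Fintype.card V : ℝ) * ((Fintype.card V : ℝ) / k) ^ k := by
  classical
  set T : Finset (Fin (k+1) → V) :=
    Finset.univ.biUnion (fun u => (GF G k ∅ u).image (Fin.cons u)) with hT
  have hmem : ∀ f : Fin (k+1) → V,
      Function.Injective f → pull G f = SimpleGraph.pathGraph (k+1) → f ∈ T := by
    intro f hinj hpull
    have hadj : ∀ i j, G.Adj (f i) (f j) ↔ (SimpleGraph.pathGraph (k+1)).Adj i j := by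
      intro i j
      constructor
      · intro h; rw [← hpull]; exact h
      · intro h; rw [← hpull] at h; exact h
    rw [hT, Finset.mem_biUnion]
    refine ⟨f 0, Finset.mem_univ _, ?_⟩
    rw [Finset.mem_image]
    refine ⟨fun j : Fin k => f j.succ, ?_, ?_⟩
    · exact mem_GF G k ∅ f
        (fun a => by
          rw [hadj, SimpleGraph.pathGraph_adj]
          left
          simp [Fin.val_succ])
        (fun a b hab => by
          rw [hadj, SimpleGraph.pathGraph_adj]
          push_neg
          omega)
        hinj
        (fun a _ => Finset.notMem_empty _)
    · exact Fin.cons_self_tail f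
  have hsubtype : Nat.card {f : Fin (k+1) → V //
      Function.Injective f ∧ pull G f = SimpleGraph.pathGraph (k+1)} ≤ T.card := by
    have h1 : Nat.card {f : Fin (k+1) → V //
        Function.Injective f ∧ pull G f = SimpleGraph.pathGraph (k+1)}
        ≤ Nat.card {g : Fin (k+1) → V // g ∈ T} :=
      Nat.card_le_card_of_injective
        (fun x => ⟨x.1, hmem x.1 x.2.1 x.2.2⟩)
        (fun x y hxy => by
          apply Subtype.ext
          have hval := congrArg Subtype.val hxy
          simpa using hval)
    have h2 : Nat.card {g : Fin (k+1) → V // g ∈ T} = T.card := by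
      rw [Nat.card_eq_fintype_card, Fintype.card_coe]
    rwa [h2] at h1
  have hTcard : (T.card : ℝ) ≤ (Fintype.card V : ℝ) * ((Fintype.card V : ℝ) / k) ^ k := by
    have hnat : T.card ≤ ∑ u : V, (GF G k ∅ u).card := by
      refine le_trans Finset.card_biUnion_le ?_
      exact Finset.sum_le_sum fun u _ => Finset.card_image_le
    calc (T.card : ℝ) ≤ ∑ u : V, ((GF G k ∅ u).card : ℝ) := by exact_mod_cast hnat
      _ ≤ ∑ _u : V, ((Fintype.card V : ℝ) / k) ^ k := by
          refine Finset.sum_le_sum fun u _ => ?_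
          have := GF_card G k ∅ u
          simpa using this
      _ = (Fintype.card V : ℝ) * ((Fintype.card V : ℝ) / k) ^ k := by
          rw [Finset.sum_const, nsmul_eq_mul, Finset.card_univ]
  calc (Nat.card {f : Fin (k+1) → V //
        Function.Injective f ∧ pull G f = SimpleGraph.pathGraph (k+1)} : ℝ)
      ≤ (T.card : ℝ) := by exact_mod_cast hsubtype
    _ ≤ _ := hTcard

/-- Reversal invariance of the path graph. -/
lemma pathGraph_rev_adj (k : ℕ) (i j : Fin (k+1)) :
    (SimpleGraph.pathGraph (k+1)).Adj i.rev j.rev ↔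
      (SimpleGraph.pathGraph (k+1)).Adj i j := by
  rw [SimpleGraph.pathGraph_adj, SimpleGraph.pathGraph_adj]
  have hi := i.isLt
  have hj := j.isLt
  rw [Fin.val_rev, Fin.val_rev]
  omega

noncomputable def base (G : SimpleGraph V) (k : ℕ) (s : Finset V)
    (h : Nonempty (G.induce (↑s : Set V) ≃g SimpleGraph.pathGraph (k+1))) :
    Fin (k+1) → V :=
  fun i => ((h.some.symm i : (↑s : Set V)) : V)

lemma base_injective (G : SimpleGraph V) (k : ℕ) (s : Finset V)
    (h : Nonempty (G.induce (↑s : Set V) ≃g SimpleGraph.pathGraph (k+1))) :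
    Function.Injective (base G k s h) :=
  Subtype.val_injective.comp h.some.symm.toEquiv.injective

lemma base_adj (G : SimpleGraph V) (k : ℕ) (s : Finset V)
    (h : Nonempty (G.induce (↑s : Set V) ≃g SimpleGraph.pathGraph (k+1)))
    (i j : Fin (k+1)) :
    G.Adj (base G k s h i) (base G k s h j) ↔ (SimpleGraph.pathGraph (k+1)).Adj i j :=
  h.some.symm.map_adj_iff

lemma base_pull (G : SimpleGraph V) (k : ℕ) (s : Finset V)
    (h : Nonempty (G.induce (↑s : Set V) ≃g SimpleGraph.pathGraph (k+1))) :
    pull G (base G k s h) = SimpleGraph.pathGraph (k+1) := by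
  ext i j
  exact base_adj G k s h i j

lemma base_pull_rev (G : SimpleGraph V) (k : ℕ) (s : Finset V)
    (h : Nonempty (G.induce (↑s : Set V) ≃g SimpleGraph.pathGraph (k+1))) :
    pull G (base G k s h ∘ Fin.rev) = SimpleGraph.pathGraph (k+1) := by
  ext i j
  constructor
  · intro hadj
    exact (pathGraph_rev_adj k i j).1 ((base_adj G k s h i.rev j.rev).1 hadj)
  · intro hadj
    exact (base_adj G k s h i.rev j.rev).2 ((pathGraph_rev_adj k i j).2 hadj)

lemma base_range (G : SimpleGraph V) (k : ℕ) (s : Finset V)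
    (h : Nonempty (G.induce (↑s : Set V) ≃g SimpleGraph.pathGraph (k+1))) :
    Set.range (base G k s h) = (↑s : Set V) := by
  ext v
  constructor
  · rintro ⟨i, rfl⟩
    exact (h.some.symm i).2
  · intro hv
    refine ⟨h.some ⟨v, hv⟩, ?_⟩
    show ((h.some.symm (h.some ⟨v, hv⟩) : (↑s : Set V)) : V) = v
    rw [RelIso.symm_apply_apply]

lemma two_mul_subset_card_le (G : SimpleGraph V) (k : ℕ) (hk : 1 ≤ k) :
    2 * Nat.card {s : Finset V // s.card = (k+1) ∧
        Nonempty (G.induce (↑s : Set V) ≃g SimpleGraph.pathGraph (k+1))}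
      ≤ Nat.card {f : Fin (k+1) → V //
        Function.Injective f ∧ pull G f = SimpleGraph.pathGraph (k+1)} := by
  classical
  have hrev_surj : Function.Surjective (Fin.rev : Fin (k+1) → Fin (k+1)) :=
    Fin.rev_surjective
  set Φ : ({s : Finset V // s.card = (k+1) ∧
      Nonempty (G.induce (↑s : Set V) ≃g SimpleGraph.pathGraph (k+1))} × Bool) →
      {f : Fin (k+1) → V //
        Function.Injective f ∧ pull G f = SimpleGraph.pathGraph (k+1)} :=
    fun x =>
      cond x.2
        ⟨base G k x.1.1 x.1.2.2, base_injective G k x.1.1 x.1.2.2,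
          base_pull G k x.1.1 x.1.2.2⟩
        ⟨base G k x.1.1 x.1.2.2 ∘ Fin.rev,
          (base_injective G k x.1.1 x.1.2.2).comp (Fin.rev_injective),
          base_pull_rev G k x.1.1 x.1.2.2⟩ with hΦ
  have hrange : ∀ s bb, Set.range ((Φ (s, bb)).1) = (↑s.1 : Set V) := by
    intro s bb
    cases bb
    · show Set.range (base G k s.1 s.2.2 ∘ Fin.rev) = _
      rw [Function.Surjective.range_comp hrev_surj]
      exact base_range G k s.1 s.2.2
    · exact base_range G k s.1 s.2.2
  have hΦinj : Function.Injective Φ := by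
    rintro ⟨xs, b⟩ ⟨ys, c⟩ hxy
    have hs : xs = ys := by
      apply Subtype.ext
      apply Finset.coe_injective
      rw [← hrange xs b, ← hrange ys c, hxy]
    subst hs
    have hrevne : ¬ (base G k xs.1 xs.2.2 ∘ Fin.rev = base G k xs.1 xs.2.2) := by
      intro hkey
      have h0 : base G k xs.1 xs.2.2 (Fin.rev 0) = base G k xs.1 xs.2.2 0 :=
        congrFun hkey 0
      have h00 : Fin.rev (0 : Fin (k+1)) = 0 := base_injective G k xs.1 xs.2.2 h0
      have hval : (Fin.rev (0 : Fin (k+1)) : ℕ) = k := by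
        rw [Fin.val_rev]
        simp
      rw [h00] at hval
      simp at hval
      omega
    cases b <;> cases c
    · rfl
    · exfalso
      have hval : (Φ (xs, false)).1 = (Φ (xs, true)).1 := by rw [hxy]
      exact hrevne hval
    · exfalso
      have hval : (Φ (xs, true)).1 = (Φ (xs, false)).1 := by rw [hxy]
      exact hrevne hval.symm
    · rfl
  have hcard := Nat.card_le_card_of_injective Φ hΦinj
  rw [Nat.card_prod] at hcard
  have hbool : Nat.card Bool = 2 := by
    rw [Nat.card_eq_fintype_card]
    simp
  rw [hbool] at hcard
  omega

lemma subsetDensity_le (G : SimpleGraph V) (k : ℕ) (hk : 1 ≤ k) :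
    subsetDensity (SimpleGraph.pathGraph (k+1)) G ≤
      ((Fintype.card V : ℝ) * ((Fintype.card V : ℝ) / k) ^ k / 2) /
        ((Fintype.card V).choose (k+1) : ℝ) := by
  rw [subsetDensity]
  rcases Nat.eq_zero_or_pos ((Fintype.card V).choose (k+1)) with hc | hc
  · rw [hc]
    simp only [Nat.cast_zero, div_zero]
    positivity
  · have h2 := two_mul_subset_card_le G k hk
    have h3 := path_count G k
    have hnum : (Nat.card {s : Finset V // s.card = (k+1) ∧
        Nonempty (G.induce (↑s : Set V) ≃g SimpleGraph.pathGraph (k+1))} : ℝ)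
        ≤ (Fintype.card V : ℝ) * ((Fintype.card V : ℝ) / k) ^ k / 2 := by
      have h2' : (2:ℝ) * (Nat.card {s : Finset V // s.card = (k+1) ∧
          Nonempty (G.induce (↑s : Set V) ≃g SimpleGraph.pathGraph (k+1))} : ℝ)
          ≤ (Nat.card {f : Fin (k+1) → V //
            Function.Injective f ∧ pull G f = SimpleGraph.pathGraph (k+1)} : ℝ) := by
        exact_mod_cast h2
      linarith
    have hcpos : (0:ℝ) < ((Fintype.card V).choose (k+1) : ℝ) := by exact_mod_cast hc
    rw [div_le_div_iff₀ hcpos hcpos]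
    calc (Nat.card {s : Finset V // s.card = (k+1) ∧
          Nonempty (G.induce (↑s : Set V) ≃g SimpleGraph.pathGraph (k+1))} : ℝ) *
          ((Fintype.card V).choose (k+1) : ℝ)
        ≤ ((Fintype.card V : ℝ) * ((Fintype.card V : ℝ) / k) ^ k / 2) *
          ((Fintype.card V).choose (k+1) : ℝ) := by
          exact mul_le_mul_of_nonneg_right hnum (le_of_lt hcpos)

lemma maxDensity_le_aux (k n : ℕ) (hk : 1 ≤ k) :
    maxDensity (SimpleGraph.pathGraph (k+1)) n ≤
      ((n:ℝ) * ((n:ℝ) / k) ^ k / 2) / (n.choose (k+1) : ℝ) := by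
  unfold maxDensity
  apply Real.sSup_le
  · rintro x ⟨G, rfl⟩
    have := subsetDensity_le G k hk
    simpa [Fintype.card_fin] using this
  · positivity

lemma maxDensity_nonneg_aux (k n : ℕ) (hk : 1 ≤ k) :
    0 ≤ maxDensity (SimpleGraph.pathGraph (k+1)) n := by
  unfold maxDensity
  have hbdd : BddAbove {x : ℝ | ∃ G : SimpleGraph (Fin n),
      x = subsetDensity (SimpleGraph.pathGraph (k+1)) G} := by
    refine ⟨((n:ℝ) * ((n:ℝ) / k) ^ k / 2) / (n.choose (k+1) : ℝ), ?_⟩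
    rintro x ⟨G, rfl⟩
    have := subsetDensity_le G k hk
    simpa [Fintype.card_fin] using this
  have hmem : subsetDensity (SimpleGraph.pathGraph (k+1)) (⊥ : SimpleGraph (Fin n)) ∈
      {x : ℝ | ∃ G : SimpleGraph (Fin n),
        x = subsetDensity (SimpleGraph.pathGraph (k+1)) G} := ⟨⊥, rfl⟩
  refine le_trans ?_ (le_csSup hbdd hmem)
  unfold subsetDensity
  positivity

lemma tendsto_ratio (k : ℕ) (hk : 1 ≤ k) :
    Filter.Tendsto (fun n : ℕ => ((n:ℝ) * ((n:ℝ) / k) ^ k / 2) / (n.choose (k+1) : ℝ))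
      Filter.atTop (nhds (((k+1).factorial : ℝ) / (2 * (k:ℝ) ^ k))) := by
  have hkR : (k:ℝ) ≠ 0 := by
    have : (0:ℝ) < k := by exact_mod_cast hk
    exact ne_of_gt this
  have hfac : (((k+1).factorial : ℕ) : ℝ) ≠ 0 := by
    exact_mod_cast (Nat.factorial_pos (k+1)).ne'
  have hr : ∀ i : ℕ, Filter.Tendsto (fun n : ℕ => (n:ℝ)/((n:ℝ) - i))
      Filter.atTop (nhds 1) := by
    intro i
    have h1 : Filter.Tendsto (fun n : ℕ => 1 - (i:ℝ)/(n:ℝ)) Filter.atTop (nhds 1) := by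
      have := (tendsto_const_div_atTop_nhds_zero_nat (i:ℝ))
      have h2 := Filter.Tendsto.sub (tendsto_const_nhds (x := (1:ℝ))) this
      simpa using h2
    have heq : (fun n : ℕ => ((n:ℝ) - i)/(n:ℝ)) =ᶠ[Filter.atTop]
        (fun n : ℕ => 1 - (i:ℝ)/(n:ℝ)) := by
      filter_upwards [Filter.eventually_ge_atTop 1] with n hn
      have hn0 : (n:ℝ) ≠ 0 := by
        have : (0:ℝ) < n := by exact_mod_cast hn
        exact ne_of_gt this
      field_simp
    have h3 : Filter.Tendsto (fun n : ℕ => ((n:ℝ) - i)/(n:ℝ)) Filter.atTop (nhds 1) :=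
      Filter.Tendsto.congr' heq.symm h1
    have h4 := h3.inv₀ one_ne_zero
    simpa [inv_div] using h4
  have hprod : Filter.Tendsto
      (fun n : ℕ => ∏ i ∈ Finset.range (k+1), ((n:ℝ)/((n:ℝ) - i)))
      Filter.atTop (nhds 1) := by
    have := tendsto_finset_prod (f := fun (i : ℕ) (n : ℕ) => (n:ℝ)/((n:ℝ) - i))
      (x := Filter.atTop) (a := fun _ => (1:ℝ)) (Finset.range (k+1))
      (fun i _ => hr i)
    simpa using this
  have hmul : Filter.Tendsto
      (fun n : ℕ => (((k+1).factorial : ℝ) / (2 * (k:ℝ) ^ k)) *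
        ∏ i ∈ Finset.range (k+1), ((n:ℝ)/((n:ℝ) - i)))
      Filter.atTop (nhds (((k+1).factorial : ℝ) / (2 * (k:ℝ) ^ k))) := by
    have := hprod.const_mul (((k+1).factorial : ℝ) / (2 * (k:ℝ) ^ k))
    simpa using this
  refine Filter.Tendsto.congr' ?_ hmul
  filter_upwards [Filter.eventually_ge_atTop (k+1)] with n hn
  have hD : (n.descFactorial (k+1) : ℝ) = ∏ i ∈ Finset.range (k+1), ((n:ℝ) - i) := by
    rw [Nat.descFactorial_eq_prod_range, Nat.cast_prod]
    refine Finset.prod_congr rfl fun i hi => ?_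
    have hi' : i < k + 1 := Finset.mem_range.1 hi
    have : i ≤ n := by omega
    exact Nat.cast_sub this
  have hDpos : (0:ℝ) < ∏ i ∈ Finset.range (k+1), ((n:ℝ) - i) := by
    refine Finset.prod_pos fun i hi => ?_
    have hi' : i < k + 1 := Finset.mem_range.1 hi
    have : (i:ℝ) < (n:ℝ) := by exact_mod_cast (by omega : i < n)
    linarith
  have hch : ((n.choose (k+1)) : ℝ) =
      (∏ i ∈ Finset.range (k+1), ((n:ℝ) - i)) / (((k+1).factorial : ℕ) : ℝ) := by
    have h := Nat.descFactorial_eq_factorial_mul_choose n (k+1)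
    have h' : (n.descFactorial (k+1) : ℝ) =
        (((k+1).factorial : ℕ) : ℝ) * ((n.choose (k+1)) : ℝ) := by exact_mod_cast h
    rw [hD] at h'
    field_simp
    linarith [h']
  have hratio : ∏ i ∈ Finset.range (k+1), ((n:ℝ)/((n:ℝ) - i)) =
      (n:ℝ)^(k+1) / ∏ i ∈ Finset.range (k+1), ((n:ℝ) - i) := by
    rw [Finset.prod_div_distrib, Finset.prod_const, Finset.card_range]
  rw [hratio, hch, div_pow]
  field_simp
  ring

end IndProofAux

open IndPaper in
/-- For `t ≥ 5`, the inducibility of the `t`-vertex path satisfies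
`I(P_t) ≤ t!/(2(t−1)^{t−1})`. -/
theorem inducibility_path_upper {t : ℕ} (ht : 5 ≤ t) :
    inducibility (SimpleGraph.pathGraph t) ≤
      (Nat.factorial t : ℝ) / (2 * ((t : ℝ) - 1) ^ (t - 1)) := by
  obtain ⟨k, rfl⟩ : ∃ k, t = k + 1 := ⟨t - 1, by omega⟩
  have hk : 1 ≤ k := by omega
  have hrw1 : ((k+1 : ℕ) : ℝ) - 1 = (k:ℝ) := by push_cast; ring
  have hrw2 : (k + 1) - 1 = k := by omega
  rw [hrw2, hrw1]
  have hc := IndProofAux.tendsto_ratio k hk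
  have hub : ∀ n, maxDensity (SimpleGraph.pathGraph (k+1)) n ≤
      ((n:ℝ) * ((n:ℝ) / k) ^ k / 2) / (n.choose (k+1) : ℝ) :=
    fun n => IndProofAux.maxDensity_le_aux k n hk
  have hcob : Filter.IsCoboundedUnder (· ≤ ·) Filter.atTop
      (fun n => maxDensity (SimpleGraph.pathGraph (k+1)) n) :=
    Filter.isCoboundedUnder_le_of_le Filter.atTop
      (fun n => IndProofAux.maxDensity_nonneg_aux k n hk)
  have hbd : Filter.IsBoundedUnder (· ≤ ·) Filter.atTop
      (fun n : ℕ => ((n:ℝ) * ((n:ℝ) / k) ^ k / 2) / (n.choose (k+1) : ℝ)) :=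
    hc.isBoundedUnder_le
  have hlim : inducibility (SimpleGraph.pathGraph (k+1)) ≤
      Filter.limsup (fun n : ℕ => ((n:ℝ) * ((n:ℝ) / k) ^ k / 2) / (n.choose (k+1) : ℝ))
        Filter.atTop := by
    unfold inducibility
    exact Filter.limsup_le_limsup (Filter.Eventually.of_forall hub) hcob hbd
  have heq := hc.limsup_eq
  rw [heq] at hlim
  exact hlim
end

section
/- For every finite simple graph H on t ≥ 1 vertices and every integer n ≥ t: max over simple graphs G on n vertices of P(H,G) is at most I(H) + t²/n. -/
open Filter Topology SimpleGraph

section AuxLemmas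
open Finset

/-- Weierstrass product inequality. -/
lemma weier {ι : Type*} (s : Finset ι) (x : ι → ℝ) :
    (∀ i ∈ s, 0 ≤ x i) → (∀ i ∈ s, x i ≤ 1) →
    1 - ∑ i ∈ s, x i ≤ ∏ i ∈ s, (1 - x i) := by
  induction s using Finset.cons_induction with
  | empty => intro _ _; simp
  | cons a s ha ih =>
    intro h0 h1
    rw [Finset.sum_cons, Finset.prod_cons]
    have hs0 : (0:ℝ) ≤ ∑ i ∈ s, x i :=
      Finset.sum_nonneg fun i hi => h0 i (Finset.mem_cons_of_mem hi)
    have hih := ih (fun i hi => h0 i (Finset.mem_cons_of_mem hi))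
      (fun i hi => h1 i (Finset.mem_cons_of_mem hi))
    have h0a := h0 a (Finset.mem_cons_self a s)
    have h1a := h1 a (Finset.mem_cons_self a s)
    nlinarith

/-- descFactorial ratio bound. -/
lemma ratio_desc {t n k : ℕ} (ht : 1 ≤ t) (hn : t ≤ n) (hk : 1 ≤ k) :
    (((n*k).descFactorial t : ℝ)) * (1 - (t:ℝ)^2/n) ≤ (n.descFactorial t : ℝ) * (k:ℝ)^t := by
  have hn0 : 0 < n := lt_of_lt_of_le ht hn
  have hnR : (0:ℝ) < n := by exact_mod_cast hn0
  have hkR : (1:ℝ) ≤ k := by exact_mod_cast hk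
  set x : ℕ → ℝ := fun i => ((i:ℝ)*((k:ℝ)-1))/((n:ℝ)*k - i) with hx
  have hden : ∀ i ∈ range t, (0:ℝ) < (n:ℝ)*k - i := by
    intro i hi
    have hi' : (i:ℝ) < t := by exact_mod_cast mem_range.mp hi
    have : (t:ℝ) ≤ n := by exact_mod_cast hn
    nlinarith
  have hx0 : ∀ i ∈ range t, 0 ≤ x i := by
    intro i hi
    apply div_nonneg
    · have : (0:ℝ) ≤ (i:ℝ) := Nat.cast_nonneg i
      nlinarith
    · exact le_of_lt (hden i hi)
  have hx1 : ∀ i ∈ range t, x i ≤ 1 := by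
    intro i hi
    rw [div_le_one (hden i hi)]
    have hi' : (i:ℝ) < t := by exact_mod_cast mem_range.mp hi
    have htn : (t:ℝ) ≤ n := by exact_mod_cast hn
    nlinarith
  have hxsum : ∑ i ∈ range t, x i ≤ (t:ℝ)^2/n := by
    have hxle : ∀ i ∈ range t, x i ≤ (t:ℝ)/n := by
      intro i hi
      rw [div_le_div_iff₀ (hden i hi) hnR]
      have hi' : (i:ℝ) < t := by exact_mod_cast mem_range.mp hi
      have htn : (t:ℝ) ≤ n := by exact_mod_cast hn
      have hi0 : (0:ℝ) ≤ i := Nat.cast_nonneg i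
      have hk0 : (0:ℝ) ≤ k := by positivity
      nlinarith [mul_nonneg (mul_nonneg hnR.le hk0) (by linarith : (0:ℝ) ≤ (t:ℝ)-(i:ℝ)),
        mul_nonneg hi0 (by linarith : (0:ℝ) ≤ (n:ℝ)-(t:ℝ))]
    calc ∑ i ∈ range t, x i ≤ ∑ _i ∈ range t, (t:ℝ)/n := Finset.sum_le_sum hxle
      _ = t * ((t:ℝ)/n) := by rw [Finset.sum_const, card_range]; ring
      _ = (t:ℝ)^2/n := by ring
  have hD1 : ((n*k).descFactorial t : ℝ) = ∏ i ∈ range t, ((n:ℝ)*k - i) := by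
    rw [Nat.descFactorial_eq_prod_range, Nat.cast_prod]
    refine Finset.prod_congr rfl fun i hi => ?_
    have : i ≤ n*k := le_trans (le_of_lt (mem_range.mp hi)) (le_trans hn (Nat.le_mul_of_pos_right n hk))
    rw [Nat.cast_sub this]; push_cast; ring
  have hD2 : (n.descFactorial t : ℝ) * (k:ℝ)^t = ∏ i ∈ range t, (((n:ℝ) - i) * k) := by
    rw [Nat.descFactorial_eq_prod_range, Nat.cast_prod, Finset.prod_mul_distrib,
      Finset.prod_const, card_range]
    congr 1
    refine Finset.prod_congr rfl fun i hi => ?_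
    have : i ≤ n := le_trans (le_of_lt (mem_range.mp hi)) hn
    rw [Nat.cast_sub this]
  rw [hD1, hD2]
  have hfac : ∀ i ∈ range t, ((n:ℝ) - i) * k = ((n:ℝ)*k - i) * (1 - x i) := by
    intro i hi
    have hd := hden i hi
    simp only [hx]
    rw [mul_sub, mul_one, mul_div_assoc', mul_div_right_comm, div_self hd.ne', one_mul]
    ring
  rw [Finset.prod_congr rfl hfac, Finset.prod_mul_distrib]
  have hprodz : (0:ℝ) ≤ ∏ i ∈ range t, ((n:ℝ)*k - i) :=
    Finset.prod_nonneg fun i hi => le_of_lt (hden i hi)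
  have hw := weier (range t) x hx0 hx1
  calc (∏ i ∈ range t, ((n:ℝ)*k - i)) * (1 - (t:ℝ)^2/n)
      ≤ (∏ i ∈ range t, ((n:ℝ)*k - i)) * (1 - ∑ i ∈ range t, x i) := by
        apply mul_le_mul_of_nonneg_left _ hprodz; linarith
    _ ≤ (∏ i ∈ range t, ((n:ℝ)*k - i)) * ∏ i ∈ range t, (1 - x i) :=
        mul_le_mul_of_nonneg_left hw hprodz

/-- choose ratio bound. -/
lemma ratio_choose {t n k : ℕ} (ht : 1 ≤ t) (hn : t ≤ n) (hk : 1 ≤ k) :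
    (((n*k).choose t : ℝ)) * (1 - (t:ℝ)^2/n) ≤ (n.choose t : ℝ) * (k:ℝ)^t := by
  have h := ratio_desc (t := t) (n := n) (k := k) ht hn hk
  rw [Nat.descFactorial_eq_factorial_mul_choose, Nat.descFactorial_eq_factorial_mul_choose] at h
  push_cast at h
  have hfac : (0:ℝ) < (t.factorial : ℝ) := by exact_mod_cast t.factorial_pos
  nlinarith

section Counts
open IndPaper
variable {t : ℕ} (H : SimpleGraph (Fin t))

lemma aux_count_le {V : Type*} [Fintype V] (G : SimpleGraph V) :
    Nat.card {s : Finset V // s.card = t ∧ Nonempty (G.induce (↑s : Set V) ≃g H)} ≤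
      (Fintype.card V).choose t := by
  classical
  calc Nat.card {s : Finset V // s.card = t ∧ Nonempty (G.induce (↑s : Set V) ≃g H)}
      ≤ Nat.card {s : Finset V // s.card = t} := by
        apply Nat.card_le_card_of_injective
          (fun x : {s : Finset V // s.card = t ∧ Nonempty (G.induce (↑s : Set V) ≃g H)} =>
            (⟨x.1, x.2.1⟩ : {s : Finset V // s.card = t}))
        intro a b hab
        exact Subtype.ext (congrArg (fun z : {s : Finset V // s.card = t} => z.1) hab)
    _ = (Fintype.card V).choose t := by
        rw [Nat.card_eq_fintype_card, Fintype.card_finset_len]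

lemma subsetDensity_nonneg {V : Type*} [Fintype V] (G : SimpleGraph V) :
    0 ≤ subsetDensity H G := by
  unfold subsetDensity; positivity

lemma subsetDensity_le_one {V : Type*} [Fintype V] (G : SimpleGraph V) :
    subsetDensity H G ≤ 1 := by
  unfold subsetDensity
  rcases Nat.eq_zero_or_pos ((Fintype.card V).choose t) with h | h
  · have h0 : Nat.card {s : Finset V // s.card = t ∧
        Nonempty (G.induce (↑s : Set V) ≃g H)} = 0 :=
      Nat.le_zero.mp (h ▸ aux_count_le H G)
    simp [h0]
  · rw [div_le_one (by exact_mod_cast h)]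
    exact_mod_cast aux_count_le H G

lemma maxDensity_le_one (m : ℕ) : maxDensity H m ≤ 1 := by
  apply Real.sSup_le _ zero_le_one
  rintro x ⟨G, rfl⟩
  exact subsetDensity_le_one H G

lemma maxDensity_bddAbove (m : ℕ) :
    BddAbove {x : ℝ | ∃ G : SimpleGraph (Fin m), x = subsetDensity H G} :=
  ⟨1, by rintro x ⟨G, rfl⟩; exact subsetDensity_le_one H G⟩

lemma maxDensity_nonneg (m : ℕ) : 0 ≤ maxDensity H m := by
  refine le_trans (subsetDensity_nonneg H (⊥ : SimpleGraph (Fin m)))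
    (le_csSup (maxDensity_bddAbove H m) ⟨⊥, rfl⟩)

lemma count_blowup {n k : ℕ} (G : SimpleGraph (Fin n)) :
    Nat.card {s : Finset (Fin n) // s.card = t ∧
        Nonempty (G.induce (↑s : Set (Fin n)) ≃g H)} * k ^ t ≤
    Nat.card {s : Finset (Fin (n*k)) // s.card = t ∧ Nonempty
      (((blowUp G k).comap (finProdFinEquiv.symm : Fin (n*k) → Fin n × Fin k)).induce
        (↑s : Set (Fin (n*k))) ≃g H)} := by
  classical
  set e : Fin n × Fin k ≃ Fin (n*k) := finProdFinEquiv with he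
  set G' : SimpleGraph (Fin (n*k)) :=
    (blowUp G k).comap (e.symm : Fin (n*k) → Fin n × Fin k) with hG'
  set f : (s : Finset (Fin n)) → s.card = t → (Fin t → Fin k) → Fin t → Fin (n*k) :=
    fun s hs g i => e (s.orderEmbOfFin hs i, g i) with hf
  have hkey : ∀ s hs g i, (e.symm (f s hs g i)) = (s.orderEmbOfFin hs i, g i) := by
    intro s hs g i; rw [hf]; exact e.symm_apply_apply _
  have hfinj : ∀ s hs g, Function.Injective (f s hs g) := by
    intro s hs g i j hij
    have hp := e.injective hij
    exact (s.orderEmbOfFin hs).injective (congrArg Prod.fst hp)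
  have hcard : ∀ s hs g, (Finset.image (f s hs g) Finset.univ).card = t := by
    intro s hs g
    rw [Finset.card_image_of_injective _ (hfinj s hs g), Finset.card_univ, Fintype.card_fin]
  have hmem : ∀ s hs g i, f s hs g i ∈ Finset.image (f s hs g) Finset.univ := by
    intro s hs g i; exact Finset.mem_image_of_mem _ (Finset.mem_univ i)
  have hiso : ∀ (s : Finset (Fin n)) (hs : s.card = t) (g : Fin t → Fin k),
      Nonempty (G.induce (↑s : Set (Fin n)) ≃g H) →
      Nonempty (G'.induce (↑(Finset.image (f s hs g) Finset.univ) : Set (Fin (n*k))) ≃g H) := by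
    rintro s hs g ⟨iso⟩
    set s' := Finset.image (f s hs g) Finset.univ with hs'
    have hχ : Function.Bijective (fun i : Fin t =>
        (⟨s.orderEmbOfFin hs i, Finset.mem_coe.mpr (Finset.orderEmbOfFin_mem s hs i)⟩ :
          (↑s : Set (Fin n)))) := by
      constructor
      · intro i j hij
        exact (s.orderEmbOfFin hs).injective (congrArg Subtype.val hij)
      · rintro ⟨x, hx⟩
        have : x ∈ Set.range (s.orderEmbOfFin hs) := by
          rw [Finset.range_orderEmbOfFin]; exact hx
        obtain ⟨i, hi⟩ := this
        exact ⟨i, Subtype.ext hi⟩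
    have hψ : Function.Bijective (fun i : Fin t =>
        (⟨f s hs g i, Finset.mem_coe.mpr (hmem s hs g i)⟩ : (↑s' : Set (Fin (n*k))))) := by
      constructor
      · intro i j hij
        exact hfinj s hs g (congrArg Subtype.val hij)
      · rintro ⟨x, hx⟩
        obtain ⟨i, -, rfl⟩ := Finset.mem_image.mp (Finset.mem_coe.mp hx)
        exact ⟨i, rfl⟩
    set χ := Equiv.ofBijective _ hχ
    set ψ := Equiv.ofBijective _ hψ
    have hadj : ∀ i j : Fin t, (G'.induce (↑s' : Set (Fin (n*k)))).Adj (ψ i) (ψ j) ↔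
        (G.induce (↑s : Set (Fin n))).Adj (χ i) (χ j) := by
      intro i j
      show G'.Adj (f s hs g i) (f s hs g j) ↔ G.Adj (s.orderEmbOfFin hs i) (s.orderEmbOfFin hs j)
      show (blowUp G k).Adj (e.symm (f s hs g i)) (e.symm (f s hs g j)) ↔ _
      rw [hkey, hkey]
      rfl
    refine ⟨RelIso.trans (RelIso.symm ?_) iso⟩
    exact { toEquiv := χ.symm.trans ψ,
            map_rel_iff' := by
              intro a b
              obtain ⟨i, rfl⟩ := χ.surjective a
              obtain ⟨j, rfl⟩ := χ.surjective b
              simp only [Equiv.trans_apply, Equiv.symm_apply_apply]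
              exact hadj i j }
  have hrecover : ∀ (s : Finset (Fin n)) (hs : s.card = t) (g : Fin t → Fin k),
      Finset.image (fun v => (e.symm v).1) (Finset.image (f s hs g) Finset.univ) = s := by
    intro s hs g
    ext x
    constructor
    · intro hx
      obtain ⟨v, hv, rfl⟩ := Finset.mem_image.mp hx
      obtain ⟨i, -, rfl⟩ := Finset.mem_image.mp hv
      rw [hkey]
      exact Finset.orderEmbOfFin_mem s hs i
    · intro hx
      have : x ∈ Set.range (s.orderEmbOfFin hs) := by
        rw [Finset.range_orderEmbOfFin]; exact hx
      obtain ⟨i, rfl⟩ := this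
      refine Finset.mem_image.mpr ⟨f s hs g i, hmem s hs g i, ?_⟩
      rw [hkey]
  set F : ({s : Finset (Fin n) // s.card = t ∧
        Nonempty (G.induce (↑s : Set (Fin n)) ≃g H)} × (Fin t → Fin k)) →
      {s : Finset (Fin (n*k)) // s.card = t ∧
        Nonempty (G'.induce (↑s : Set (Fin (n*k))) ≃g H)} :=
    fun p => ⟨Finset.image (f p.1.1 p.1.2.1 p.2) Finset.univ, hcard _ _ _,
      hiso _ _ _ p.1.2.2⟩ with hF
  have hFinj : Function.Injective F := by
    rintro ⟨⟨s1, hs1⟩, g1⟩ ⟨⟨s2, hs2⟩, g2⟩ h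
    have himg : Finset.image (f s1 hs1.1 g1) Finset.univ
        = Finset.image (f s2 hs2.1 g2) Finset.univ :=
      congrArg (fun z : {s : Finset (Fin (n*k)) // s.card = t ∧
        Nonempty (G'.induce (↑s : Set (Fin (n*k))) ≃g H)} => z.1) h
    have hss : s1 = s2 := by
      rw [← hrecover s1 hs1.1 g1, himg, hrecover s2 hs2.1 g2]
    subst hss
    have hg : g1 = g2 := by
      funext i
      have h1 : f s1 hs1.1 g1 i ∈ Finset.image (f s1 hs2.1 g2) Finset.univ := by
        rw [← himg]; exact hmem _ _ _ i
      obtain ⟨j, -, hj⟩ := Finset.mem_image.mp h1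
      have hpair := e.injective hj
      have hji : j = i :=
        (s1.orderEmbOfFin hs1.1).injective (congrArg Prod.fst hpair)
      have h2' : g2 j = g1 i := congrArg Prod.snd hpair
      rw [← h2', hji]
    subst hg
    rfl
  calc Nat.card {s : Finset (Fin n) // s.card = t ∧
        Nonempty (G.induce (↑s : Set (Fin n)) ≃g H)} * k ^ t
      = Nat.card ({s : Finset (Fin n) // s.card = t ∧
        Nonempty (G.induce (↑s : Set (Fin n)) ≃g H)} × (Fin t → Fin k)) := by
        rw [Nat.card_prod, Nat.card_fun]
        simp [Nat.card_eq_fintype_card]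
    _ ≤ _ := Nat.card_le_card_of_injective F hFinj

end Counts
end AuxLemmas


open IndPaper in
/-- For `H` on `t ≥ 1` vertices and `n ≥ t`, `max_{|G|=n} P(H,G) ≤ I(H) + t²/n`. -/
theorem maxDensity_le_inducibility_add {t : ℕ} (ht : 1 ≤ t) (H : SimpleGraph (Fin t))
    {n : ℕ} (hn : t ≤ n) :
    maxDensity H n ≤ inducibility H + (t : ℝ) ^ 2 / n := by
  have hn0 : 0 < n := lt_of_lt_of_le ht hn
  have hnR : (0:ℝ) < n := by exact_mod_cast hn0
  have hbdd : Filter.IsBoundedUnder (· ≤ ·) Filter.atTop (fun m => maxDensity H m) :=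
    Filter.isBoundedUnder_of ⟨1, fun m => maxDensity_le_one H m⟩
  have hind0 : 0 ≤ inducibility H :=
    Filter.le_limsup_of_frequently_le
      (Filter.Frequently.of_forall fun m => maxDensity_nonneg H m) hbdd
  apply Real.sSup_le
  · rintro x ⟨G, rfl⟩
    have hstep : ∀ k : ℕ, 1 ≤ k →
        subsetDensity H G - (t:ℝ)^2/n ≤ maxDensity H (n*k) := by
      intro k hk
      have hk0 : 0 < k := hk
      set G' : SimpleGraph (Fin (n*k)) :=
        (blowUp G k).comap (finProdFinEquiv.symm : Fin (n*k) → Fin n × Fin k) with hG'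
      have hle : subsetDensity H G' ≤ maxDensity H (n*k) :=
        le_csSup (maxDensity_bddAbove H _) ⟨G', rfl⟩
      refine le_trans ?_ hle
      have hcount := count_blowup H (k := k) G
      have hcle : Nat.card {s : Finset (Fin n) // s.card = t ∧
          Nonempty (G.induce (↑s : Set (Fin n)) ≃g H)} ≤ n.choose t := by
        have h := aux_count_le H G
        rwa [Fintype.card_fin] at h
      have hntk : t ≤ n * k := le_trans hn (Nat.le_mul_of_pos_right n hk0)
      have hN1 : (0:ℝ) < (n.choose t : ℝ) := by exact_mod_cast Nat.choose_pos hn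
      have hN2 : (0:ℝ) < ((n*k).choose t : ℝ) := by exact_mod_cast Nat.choose_pos hntk
      have hratio := ratio_choose ht hn hk
      set a : ℝ := (Nat.card {s : Finset (Fin n) // s.card = t ∧
          Nonempty (G.induce (↑s : Set (Fin n)) ≃g H)} : ℝ) with ha
      set C : ℝ := (Nat.card {s : Finset (Fin (n*k)) // s.card = t ∧ Nonempty
          (G'.induce (↑s : Set (Fin (n*k))) ≃g H)} : ℝ) with hC
      have ha0 : 0 ≤ a := by rw [ha]; positivity
      have hcountR : a * (k:ℝ)^t ≤ C := by rw [ha, hC]; exact_mod_cast hcount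
      have hcleR : a ≤ (n.choose t : ℝ) := by rw [ha]; exact_mod_cast hcle
      have hs0 : (0:ℝ) ≤ (t:ℝ)^2/n := by positivity
      have e1 : subsetDensity H G = a / (n.choose t : ℝ) := by
        rw [subsetDensity, ha, Fintype.card_fin]
      have e2 : subsetDensity H G' = C / ((n*k).choose t : ℝ) := by
        rw [subsetDensity, hC, Fintype.card_fin]
      rw [e1, e2]
      rw [show a / (n.choose t : ℝ) - (t:ℝ)^2/n
          = (a - ((t:ℝ)^2/n) * (n.choose t : ℝ)) / (n.choose t : ℝ) by
            field_simp]
      rw [div_le_div_iff₀ hN1 hN2]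
      nlinarith [mul_le_mul_of_nonneg_left hratio ha0,
        mul_le_mul_of_nonneg_left hcountR hN1.le,
        mul_nonneg (mul_nonneg hs0 hN2.le) (sub_nonneg.mpr hcleR)]
    have hfreq : ∃ᶠ m in Filter.atTop,
        subsetDensity H G - (t:ℝ)^2/n ≤ maxDensity H m := by
      rw [Filter.frequently_atTop]
      intro N
      exact ⟨n * (max 1 N), le_trans (le_max_right 1 N)
        (Nat.le_mul_of_pos_left _ hn0), hstep _ (le_max_left 1 N)⟩
    have hlim := Filter.le_limsup_of_frequently_le hfreq hbdd
    have : inducibility H = Filter.limsup (fun m => maxDensity H m) Filter.atTop := rfl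
    linarith [hlim, this ▸ le_refl (inducibility H)]
  · have : (0:ℝ) ≤ (t:ℝ)^2/n := by positivity
    linarith
end
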